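/- arXiv:1806.10535 — 2 statements merged into one kernel-verified Lean document; each statement's English description precedes it below -/
import Mathlib

section
/- For all integers d ≥ 1 and all s ∈ [0,1], the inequality d·B_s(d,d)·√(1 − (I_s(d,d))^(1/d)) ≥ s^d·(1−s)^d holds, with equality if and only if s = 0 or s = 1, where B_s(a,b) = ∫₀^s t^(a−1)(1−t)^(b−1) dt is the incomplete Beta function and I_s(a,b) = B_s(a,b)/B(a,b) is its regularized version. -/
open Real intervalIntegral
noncomputable def phi (e : ℕ) (t : ℝ) : ℝ := t ^ e * (1 - t) ^ e

lemma phi_cont (e : ℕ) : Continuous (phi e) := by unfold phi; fun_prop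

lemma phi_pos (e : ℕ) {t : ℝ} (h0 : 0 < t) (h1 : t < 1) : 0 < phi e t :=
  mul_pos (pow_pos h0 e) (pow_pos (by linarith) e)

lemma phi_nonneg (e : ℕ) {t : ℝ} (h0 : 0 ≤ t) (h1 : t ≤ 1) : 0 ≤ phi e t :=
  mul_nonneg (pow_nonneg h0 e) (pow_nonneg (by linarith) e)

lemma int_phi (e : ℕ) (a b : ℝ) : IntervalIntegrable (phi e) MeasureTheory.volume a b :=
  (phi_cont e).intervalIntegrable _ _

lemma int_tphi (e : ℕ) (a b : ℝ) :
    IntervalIntegrable (fun t => t * phi e t) MeasureTheory.volume a b :=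
  (continuous_id.mul (phi_cont e)).intervalIntegrable _ _

lemma int_t2phi (e : ℕ) (a b : ℝ) :
    IntervalIntegrable (fun t => t ^ 2 * phi e t) MeasureTheory.volume a b :=
  ((continuous_pow 2).mul (phi_cont e)).intervalIntegrable _ _

lemma int_1tphi (e : ℕ) (a b : ℝ) :
    IntervalIntegrable (fun t => (1 - t) * phi e t) MeasureTheory.volume a b :=
  ((continuous_const.sub continuous_id).mul (phi_cont e)).intervalIntegrable _ _

noncomputable def SS (e : ℕ) (x : ℝ) : ℝ := ∫ t in (0:ℝ)..x, phi e t
noncomputable def MM (e : ℕ) (x : ℝ) : ℝ := ∫ t in (0:ℝ)..x, t * phi e t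
noncomputable def TT (e : ℕ) (x : ℝ) : ℝ := ∫ t in (0:ℝ)..x, t ^ 2 * phi e t

lemma SS_hasDeriv (e : ℕ) (x : ℝ) : HasDerivAt (SS e) (phi e x) x :=
  intervalIntegral.integral_hasDerivAt_right (int_phi e _ _)
    ((phi_cont e).stronglyMeasurable.stronglyMeasurableAtFilter) (phi_cont e).continuousAt

lemma MM_hasDeriv (e : ℕ) (x : ℝ) : HasDerivAt (MM e) (x * phi e x) x :=
  intervalIntegral.integral_hasDerivAt_right (int_tphi e _ _)
    ((continuous_id.mul (phi_cont e)).stronglyMeasurable.stronglyMeasurableAtFilter)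
    (continuous_id.mul (phi_cont e)).continuousAt

lemma SS_pos (e : ℕ) {x : ℝ} (h0 : 0 < x) (h1 : x ≤ 1) : 0 < SS e x :=
  intervalIntegral.intervalIntegral_pos_of_pos_on (int_phi e _ _)
    (fun t ht => phi_pos e ht.1 (lt_of_lt_of_le ht.2 h1)) h0

lemma MM_pos (e : ℕ) {x : ℝ} (h0 : 0 < x) (h1 : x ≤ 1) : 0 < MM e x :=
  intervalIntegral.intervalIntegral_pos_of_pos_on (int_tphi e _ _)
    (fun t ht => mul_pos ht.1 (phi_pos e ht.1 (lt_of_lt_of_le ht.2 h1))) h0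

lemma SM_eq (e : ℕ) (x : ℝ) : SS e x - MM e x = ∫ t in (0:ℝ)..x, (1 - t) * phi e t := by
  rw [SS, MM, ← intervalIntegral.integral_sub (int_phi e _ _) (int_tphi e _ _)]
  congr 1; ext t; ring

lemma SM_pos (e : ℕ) {x : ℝ} (h0 : 0 < x) (h1 : x ≤ 1) : 0 < SS e x - MM e x := by
  rw [SM_eq]
  exact intervalIntegral.intervalIntegral_pos_of_pos_on (int_1tphi e _ _)
    (fun t ht => mul_pos (by linarith [ht.2, h1] : (0:ℝ) < 1 - t)
      (phi_pos e ht.1 (lt_of_lt_of_le ht.2 h1))) h0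

lemma SS_lt_one (e : ℕ) {x : ℝ} (h0 : 0 ≤ x) (h1 : x < 1) : SS e x < SS e 1 := by
  have hadd : SS e x + ∫ t in x..(1:ℝ), phi e t = SS e 1 :=
    intervalIntegral.integral_add_adjacent_intervals (int_phi e _ _) (int_phi e _ _)
  have hpos : 0 < ∫ t in x..(1:ℝ), phi e t :=
    intervalIntegral.intervalIntegral_pos_of_pos_on (int_phi e _ _)
      (fun t ht => phi_pos e (lt_of_le_of_lt h0 ht.1) ht.2) h1
  linarith

lemma MM_one (e : ℕ) : MM e 1 = SS e 1 - MM e 1 := by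
  have h1 : (∫ t in (0:ℝ)..1, (fun u => u * phi e u) (1 - t)) = ∫ t in (0:ℝ)..1, t * phi e t := by
    rw [intervalIntegral.integral_comp_sub_left (fun u => u * phi e u) 1]
    norm_num
  rw [SM_eq, MM]
  rw [← h1]
  congr 1; ext t
  show (1 - t) * phi e (1 - t) = (1 - t) * phi e t
  unfold phi; ring_nf


lemma F_hasDeriv (e : ℕ) (t : ℝ) :
    HasDerivAt (fun u : ℝ => u ^ (e+1) * (1-u) ^ (e+1))
      (((e:ℝ)+1) * ((1 - 2*t) * phi e t)) t := by
  have h1 : HasDerivAt (fun u : ℝ => u ^ (e+1)) (((e:ℝ)+1) * t ^ e) t := by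
    simpa using hasDerivAt_pow (e+1) t
  have h0 : HasDerivAt (fun u : ℝ => 1 - u) (-1) t := by
    simpa using (hasDerivAt_const t (1:ℝ)).fun_sub (hasDerivAt_id t)
  have h2 : HasDerivAt (fun u : ℝ => (1-u) ^ (e+1)) (-(((e:ℝ)+1) * (1-t) ^ e)) t := by
    have := h0.fun_pow (e+1)
    simpa [mul_comm, mul_assoc, mul_left_comm] using this
  have := h1.fun_mul h2
  refine this.congr_deriv ?_
  unfold phi; push_cast; ring

lemma idA (e : ℕ) (s : ℝ) :
    ((e:ℝ)+1) * (SS e s - 2 * MM e s) = s ^ (e+1) * (1-s) ^ (e+1) := by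
  have hint : ∫ t in (0:ℝ)..s, ((e:ℝ)+1) * ((1 - 2*t) * phi e t)
      = s ^ (e+1) * (1-s) ^ (e+1) - 0 ^ (e+1) * (1-0:ℝ) ^ (e+1) :=
    intervalIntegral.integral_eq_sub_of_hasDerivAt (fun t _ => F_hasDeriv e t)
      ((by unfold phi; fun_prop : Continuous fun t : ℝ => ((e:ℝ)+1) * ((1 - 2*t) * phi e t)).intervalIntegrable _ _)
  have hsplit : ∫ t in (0:ℝ)..s, ((e:ℝ)+1) * ((1 - 2*t) * phi e t)
      = ((e:ℝ)+1) * (SS e s - 2 * MM e s) := by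
    rw [intervalIntegral.integral_const_mul]
    congr 1
    have : (fun t : ℝ => (1 - 2*t) * phi e t) = fun t => phi e t - 2 * (t * phi e t) := by
      ext t; ring
    rw [this, intervalIntegral.integral_sub (int_phi e _ _) ((int_tphi e _ _).const_mul 2),
      intervalIntegral.integral_const_mul]
    rfl
  rw [hsplit] at hint
  simpa using hint

lemma idB (e : ℕ) (s : ℝ) :
    ((e:ℝ)+2) * MM e s - (2*(e:ℝ)+3) * TT e s = s * (s ^ (e+1) * (1-s) ^ (e+1)) := by
  have key : ∀ t : ℝ, HasDerivAt (fun u : ℝ => u * (u ^ (e+1) * (1-u) ^ (e+1)))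
      (((e:ℝ)+2) * (t * phi e t) - (2*(e:ℝ)+3) * (t ^ 2 * phi e t)) t := by
    intro t
    have := (hasDerivAt_id t).fun_mul (F_hasDeriv e t)
    refine this.congr_deriv ?_
    simp only [id_eq]
    unfold phi; push_cast; ring
  have hint : ∫ t in (0:ℝ)..s, (((e:ℝ)+2) * (t * phi e t) - (2*(e:ℝ)+3) * (t ^ 2 * phi e t))
      = s * (s ^ (e+1) * (1-s) ^ (e+1)) - 0 * ((0:ℝ) ^ (e+1) * (1-0:ℝ) ^ (e+1)) :=
    intervalIntegral.integral_eq_sub_of_hasDerivAt (fun t _ => key t)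
      ((by unfold phi; fun_prop :
        Continuous fun t : ℝ => ((e:ℝ)+2) * (t * phi e t) - (2*(e:ℝ)+3) * (t ^ 2 * phi e t)).intervalIntegrable _ _)
  rw [intervalIntegral.integral_sub ((int_tphi e _ _).const_mul _) ((int_t2phi e _ _).const_mul _),
    intervalIntegral.integral_const_mul, intervalIntegral.integral_const_mul] at hint
  simpa [MM, TT] using hint


lemma int_sqphi (e : ℕ) (c : ℝ) (a b : ℝ) :
    IntervalIntegrable (fun t => (t - c) ^ 2 * phi e t) MeasureTheory.volume a b :=
  (((continuous_id.sub continuous_const).pow 2).mul (phi_cont e)).intervalIntegrable _ _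

lemma CS (e : ℕ) {s : ℝ} (h0 : 0 < s) (h1 : s < 1) : MM e s ^ 2 < SS e s * TT e s := by
  have hS := SS_pos e h0 h1.le
  have hM := MM_pos e h0 h1.le
  set c := MM e s / SS e s with hc
  have hc0 : 0 < c := div_pos hM hS
  have expand : (∫ t in (0:ℝ)..s, (t - c) ^ 2 * phi e t)
      = TT e s - 2 * c * MM e s + c ^ 2 * SS e s := by
    have hfe : (fun t : ℝ => (t - c) ^ 2 * phi e t)
        = fun t => t ^ 2 * phi e t - 2 * c * (t * phi e t) + c ^ 2 * phi e t := by
      ext t; ring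
    rw [hfe, intervalIntegral.integral_add (((int_t2phi e _ _).sub ((int_tphi e _ _).const_mul _)))
        ((int_phi e _ _).const_mul _),
      intervalIntegral.integral_sub (int_t2phi e _ _) ((int_tphi e _ _).const_mul _),
      intervalIntegral.integral_const_mul, intervalIntegral.integral_const_mul]
    rfl
  have hpos : 0 < ∫ t in (0:ℝ)..s, (t - c) ^ 2 * phi e t := by
    rcases lt_or_ge c s with hcs | hcs
    · have hsplit : (∫ t in (0:ℝ)..c, (t - c) ^ 2 * phi e t)
          + ∫ t in c..s, (t - c) ^ 2 * phi e t = ∫ t in (0:ℝ)..s, (t - c) ^ 2 * phi e t :=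
        intervalIntegral.integral_add_adjacent_intervals (int_sqphi e c _ _) (int_sqphi e c _ _)
      have h2 : 0 < ∫ t in c..s, (t - c) ^ 2 * phi e t :=
        intervalIntegral.intervalIntegral_pos_of_pos_on (int_sqphi e c _ _)
          (fun t ht => mul_pos (pow_pos (sub_pos.mpr ht.1) 2)
            (phi_pos e (hc0.trans ht.1) (ht.2.trans h1))) hcs
      have h3 : 0 ≤ ∫ t in (0:ℝ)..c, (t - c) ^ 2 * phi e t :=
        intervalIntegral.integral_nonneg hc0.le
          (fun u hu => mul_nonneg (sq_nonneg _)
            (phi_nonneg e hu.1 (hu.2.trans (hcs.trans h1).le)))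
      linarith
    · exact intervalIntegral.intervalIntegral_pos_of_pos_on (int_sqphi e c _ _)
        (fun t ht => mul_pos
          (pow_two_pos_of_ne_zero (sub_ne_zero.mpr (ne_of_lt (ht.2.trans_le hcs))))
          (phi_pos e ht.1 (ht.2.trans h1))) h0
  have key : 0 < TT e s - 2 * c * MM e s + c ^ 2 * SS e s := expand ▸ hpos
  have hcS : c * SS e s = MM e s := by rw [hc, div_mul_cancel₀ _ hS.ne']
  nlinarith [mul_pos hS key, hcS, mul_pos hS hM]


noncomputable def LL (e : ℕ) (x : ℝ) : ℝ :=
  ((e:ℝ)+1) * Real.log (MM e x) + ((e:ℝ)+1) * Real.log (SS e x - MM e x)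
    - (2*(e:ℝ)+3) * Real.log (SS e x)

lemma num_neg (e : ℕ) {s : ℝ} (h0 : 0 < s) (h1 : s < 1) :
    ((e:ℝ)+1) * s * (SS e s * (SS e s - MM e s))
      + ((e:ℝ)+1) * (1-s) * (SS e s * MM e s)
      - (2*(e:ℝ)+3) * (MM e s * (SS e s - MM e s)) < 0 := by
  have hA := idA e s
  have hB := idB e s
  have hCS := CS e h0 h1
  have e1 : s * SS e s * (((e:ℝ)+1) * (SS e s - 2 * MM e s))
      = s * SS e s * (s ^ (e+1) * (1-s) ^ (e+1)) := by rw [hA]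
  have e2 : SS e s * (((e:ℝ)+2) * MM e s - (2*(e:ℝ)+3) * TT e s)
      = SS e s * (s * (s ^ (e+1) * (1-s) ^ (e+1))) := by rw [hB]
  have key : ((e:ℝ)+1) * s * (SS e s * (SS e s - MM e s))
      + ((e:ℝ)+1) * (1-s) * (SS e s * MM e s)
      - (2*(e:ℝ)+3) * (MM e s * (SS e s - MM e s))
      = (2*(e:ℝ)+3) * (MM e s ^ 2 - SS e s * TT e s) := by
    linear_combination e1 - e2
  rw [key]
  have : (0:ℝ) < 2*(e:ℝ)+3 := by positivity
  nlinarith [hCS]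

lemma LL_hasDeriv (e : ℕ) {x : ℝ} (h0 : 0 < x) (h1 : x ≤ 1) :
    HasDerivAt (LL e)
      (((e:ℝ)+1) * ((x * phi e x) / MM e x)
        + ((e:ℝ)+1) * (((1-x) * phi e x) / (SS e x - MM e x))
        - (2*(e:ℝ)+3) * (phi e x / SS e x)) x := by
  have hM := ((MM_hasDeriv e x).log (MM_pos e h0 h1).ne')
  have hSM0 : HasDerivAt (fun y => SS e y - MM e y) ((1-x) * phi e x) x := by
    have := (SS_hasDeriv e x).fun_sub (MM_hasDeriv e x)
    refine this.congr_deriv ?_; ring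
  have hSM := hSM0.log (SM_pos e h0 h1).ne'
  have hS := ((SS_hasDeriv e x).log (SS_pos e h0 h1).ne')
  exact ((hM.const_mul _).add (hSM.const_mul _)).sub (hS.const_mul _)

lemma LL_deriv_neg (e : ℕ) {x : ℝ} (h0 : 0 < x) (h1 : x < 1) :
    ((e:ℝ)+1) * ((x * phi e x) / MM e x)
      + ((e:ℝ)+1) * (((1-x) * phi e x) / (SS e x - MM e x))
      - (2*(e:ℝ)+3) * (phi e x / SS e x) < 0 := by
  have hS := SS_pos e h0 h1.le
  have hM := MM_pos e h0 h1.le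
  have hSM := SM_pos e h0 h1.le
  have hphi := phi_pos e h0 h1
  have hnum := num_neg e h0 h1
  have heq : ((e:ℝ)+1) * ((x * phi e x) / MM e x)
      + ((e:ℝ)+1) * (((1-x) * phi e x) / (SS e x - MM e x))
      - (2*(e:ℝ)+3) * (phi e x / SS e x)
      = phi e x * (((e:ℝ)+1) * x * (SS e x * (SS e x - MM e x))
          + ((e:ℝ)+1) * (1-x) * (SS e x * MM e x)
          - (2*(e:ℝ)+3) * (MM e x * (SS e x - MM e x)))
        / (MM e x * (SS e x - MM e x) * SS e x) := by
    field_simp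
  rw [heq]
  exact div_neg_of_neg_of_pos (mul_neg_of_pos_of_neg hphi hnum)
    (by positivity)

lemma LL_strict (e : ℕ) {s : ℝ} (h0 : 0 < s) (h1 : s < 1) : LL e 1 < LL e s := by
  have hanti : StrictAntiOn (LL e) (Set.Icc s 1) := by
    apply strictAntiOn_of_deriv_neg (convex_Icc s 1)
    · intro y hy
      exact (LL_hasDeriv e (h0.trans_le hy.1) hy.2).continuousAt.continuousWithinAt
    · intro y hy
      rw [interior_Icc] at hy
      rw [(LL_hasDeriv e (h0.trans hy.1) hy.2.le).deriv]
      exact LL_deriv_neg e (h0.trans hy.1) hy.2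
  exact hanti (Set.left_mem_Icc.mpr h1.le) (Set.right_mem_Icc.mpr h1.le) h1

lemma main_pow (e : ℕ) {s : ℝ} (h0 : 0 < s) (h1 : s < 1) :
    SS e s ^ (2*e+3) < SS e 1 * 4 ^ (e+1) * (MM e s ^ (e+1) * (SS e s - MM e s) ^ (e+1)) := by
  have hS := SS_pos e h0 h1.le
  have hM := MM_pos e h0 h1.le
  have hSM := SM_pos e h0 h1.le
  have hS1 : 0 < SS e 1 := SS_pos e one_pos le_rfl
  have hM1 : MM e 1 = SS e 1 / 2 := by have := MM_one e; linarith
  have hL := LL_strict e h0 h1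
  have hL1 : LL e 1 = (2*(e:ℝ)+2) * Real.log (SS e 1 / 2) - (2*(e:ℝ)+3) * Real.log (SS e 1) := by
    unfold LL
    rw [hM1]
    have : SS e 1 - SS e 1 / 2 = SS e 1 / 2 := by ring
    rw [this]
    ring
  rw [hL1] at hL
  unfold LL at hL
  -- convert to product form
  have hlog : Real.log ((SS e 1 / 2) ^ (2*e+2) * SS e s ^ (2*e+3))
      < Real.log (SS e 1 ^ (2*e+3) * (MM e s ^ (e+1) * (SS e s - MM e s) ^ (e+1))) := by
    rw [Real.log_mul (by positivity) (by positivity),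
      Real.log_mul (by positivity) (by positivity),
      Real.log_mul (by positivity) (by positivity),
      Real.log_pow, Real.log_pow, Real.log_pow, Real.log_pow, Real.log_pow]
    push_cast
    linarith
  have h2 := (Real.log_lt_log_iff (by positivity) (by positivity)).mp hlog
  -- now clear (S1/2)^(2e+2)
  have hhalf : (SS e 1 / 2) ^ (2*e+2) = SS e 1 ^ (2*e+2) / 4 ^ (e+1) := by
    rw [div_pow]
    congr 1
    rw [show 2*e+2 = 2*(e+1) by ring, pow_mul]
    norm_num
  rw [hhalf] at h2
  have h4 : (0:ℝ) < 4 ^ (e+1) := by positivity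
  have hS1p : (0:ℝ) < SS e 1 ^ (2*e+2) := by positivity
  rw [div_mul_eq_mul_div, div_lt_iff₀ h4] at h2
  have hfac : SS e 1 ^ (2*e+3) = SS e 1 ^ (2*e+2) * SS e 1 := by rw [← pow_succ]
  rw [hfac] at h2
  have h2' : SS e 1 ^ (2*e+2) * (SS e s ^ (2*e+3))
      < SS e 1 ^ (2*e+2) * (SS e 1 * 4 ^ (e+1) * (MM e s ^ (e+1) * (SS e s - MM e s) ^ (e+1))) := by
    nlinarith [h2]
  exact lt_of_mul_lt_mul_left h2' hS1p.le


lemma strict_ineq (e : ℕ) {s : ℝ} (h0 : 0 < s) (h1 : s < 1) :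
    s ^ (e+1) * (1-s) ^ (e+1)
      < ((e:ℝ)+1) * SS e s * Real.sqrt (1 - (SS e s / SS e 1) ^ ((1:ℝ)/((e:ℝ)+1))) := by
  have hS := SS_pos e h0 h1.le
  have hM := MM_pos e h0 h1.le
  have hb := SM_pos e h0 h1.le
  have hS1 : 0 < SS e 1 := SS_pos e one_pos le_rfl
  have hA := idA e s
  set pp : ℝ := s ^ (e+1) * (1-s) ^ (e+1) with hppdef
  have hpp : 0 < pp := mul_pos (pow_pos h0 _) (pow_pos (by linarith) _)
  set D : ℝ := (e:ℝ)+1 with hD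
  have hDpos : 0 < D := by positivity
  have hDS : 0 < D * SS e s := by positivity
  have h2dM : D * SS e s - pp = 2 * D * MM e s := by rw [← hA]; ring
  have hpplt : pp < D * SS e s := by nlinarith [mul_pos hDpos hM]
  have hsq : (D * SS e s) ^ 2 - pp ^ 2 = 4 * D ^ 2 * (MM e s * (SS e s - MM e s)) := by
    linear_combination (D * (SS e s - 2 * MM e s) + pp) * hA
  have hval : 1 - (pp / (D * SS e s)) ^ 2
      = 4 * (MM e s * (SS e s - MM e s)) / SS e s ^ 2 := by
    field_simp
    linear_combination hsq
  have hv0 : 0 < 1 - (pp / (D * SS e s)) ^ 2 := by rw [hval]; positivity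
  -- G1
  have hG1 : SS e s / SS e 1 < (1 - (pp / (D * SS e s)) ^ 2) ^ (e+1) := by
    rw [hval]
    rw [div_pow, div_lt_div_iff₀ hS1 (by positivity)]
    have hmp := main_pow e h0 h1
    have hexp : (SS e s ^ 2) ^ (e+1) = SS e s ^ (2*e+2) := by
      rw [← pow_mul]; ring_nf
    rw [mul_pow, mul_pow, hexp]
    have hfac : SS e s ^ (2*e+3) = SS e s * SS e s ^ (2*e+2) := by
      rw [← pow_succ']
    rw [hfac] at hmp
    nlinarith [hmp]
  -- G2 : rpow
  have hu0 : 0 < SS e s / SS e 1 := by positivity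
  have hG2 : (SS e s / SS e 1) ^ ((1:ℝ)/D) < 1 - (pp / (D * SS e s)) ^ 2 := by
    have hpow := Real.rpow_lt_rpow hu0.le hG1 (by positivity : (0:ℝ) < 1/D)
    rw [← Real.rpow_natCast (1 - (pp / (D * SS e s)) ^ 2) (e+1), ← Real.rpow_mul hv0.le] at hpow
    have : ((e:ℕ)+1 : ℝ) * (1/D) = 1 := by
      rw [hD]; push_cast; field_simp
    rw [show (((e+1 : ℕ)) : ℝ) = (e:ℝ)+1 by push_cast; ring] at hpow
    rw [show ((e:ℝ)+1) * (1/D) = 1 by rw [hD]; field_simp] at hpow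
    rwa [Real.rpow_one] at hpow
  have hG3 : (pp / (D * SS e s)) ^ 2 < 1 - (SS e s / SS e 1) ^ ((1:ℝ)/D) := by linarith
  have hG4 : pp / (D * SS e s) < Real.sqrt (1 - (SS e s / SS e 1) ^ ((1:ℝ)/D)) := by
    rw [show pp / (D * SS e s) = Real.sqrt ((pp / (D * SS e s)) ^ 2) by
      rw [Real.sqrt_sq (by positivity)]]
    exact Real.sqrt_lt_sqrt (by positivity) hG3
  calc pp = (pp / (D * SS e s)) * (D * SS e s) := by field_simp
    _ < Real.sqrt (1 - (SS e s / SS e 1) ^ ((1:ℝ)/D)) * (D * SS e s) :=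
        mul_lt_mul_of_pos_right hG4 hDS
    _ = D * SS e s * Real.sqrt (1 - (SS e s / SS e 1) ^ ((1:ℝ)/D)) := by ring


theorem incomplete_beta_sqrt_inequality (d : ℕ) (hd : 1 ≤ d) (s : ℝ)
    (hs : s ∈ Set.Icc (0:ℝ) 1)
    (B : ℝ → ℝ)
    (hB : ∀ x, B x = ∫ t in (0:ℝ)..x, t ^ (d - 1) * (1 - t) ^ (d - 1)) :
    (d : ℝ) * B s * Real.sqrt (1 - (B s / B 1) ^ ((1 : ℝ) / d)) ≥ s ^ d * (1 - s) ^ d ∧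
    ((d : ℝ) * B s * Real.sqrt (1 - (B s / B 1) ^ ((1 : ℝ) / d)) = s ^ d * (1 - s) ^ d ↔
      s = 0 ∨ s = 1) := by
  obtain ⟨e, rfl⟩ : ∃ e, d = e + 1 := ⟨d - 1, (Nat.succ_pred_eq_of_pos hd).symm⟩
  have hBeq : ∀ x, B x = SS e x := by
    intro x
    rw [hB]
    simp only [Nat.add_sub_cancel]
    rfl
  have hB1 : 0 < B 1 := by rw [hBeq]; exact SS_pos e one_pos le_rfl
  obtain ⟨hs0, hs1⟩ := hs
  rcases eq_or_lt_of_le hs0 with h0 | h0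
  · -- s = 0
    have hs' : s = 0 := h0.symm
    subst hs'
    have hB0 : B 0 = 0 := by
      rw [hB]
      simp
    rw [hB0]
    constructor
    · simp [zero_pow (Nat.succ_ne_zero e)]
    · constructor
      · intro _; exact Or.inl rfl
      · intro _; simp [zero_pow (Nat.succ_ne_zero e)]
  rcases eq_or_lt_of_le hs1 with h1 | h1
  · -- s = 1
    subst h1
    have hratio : B 1 / B 1 = 1 := div_self hB1.ne'
    rw [hratio, Real.one_rpow]
    norm_num [Real.sqrt_zero, zero_pow (Nat.succ_ne_zero e)]
  · -- 0 < s < 1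
    have hkey := strict_ineq e h0 h1
    have hcast : ((e+1 : ℕ) : ℝ) = (e:ℝ)+1 := by push_cast; ring
    have hgoal : s ^ (e+1) * (1-s) ^ (e+1)
        < ((e+1:ℕ) : ℝ) * B s * Real.sqrt (1 - (B s / B 1) ^ ((1:ℝ)/((e+1:ℕ):ℝ))) := by
      rw [hBeq s, hBeq 1, hcast]
      exact hkey
    constructor
    · exact le_of_lt hgoal
    · constructor
      · intro heq
        exact absurd heq.symm (ne_of_lt hgoal)
      · rintro (rfl | rfl)
        · exact absurd h0 (lt_irrefl 0)
        · exact absurd h1 (lt_irrefl 1)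
end

section
/- For every integer d ≥ 1, the function f(s) = d·B_s(d,d) + s^d(1−s)^d·(d − 2ds − √(d²(1−2s)² + 1 + 2d)) satisfies f(s) ≥ 0 for all s ∈ (0,1), where B_s(d,d) is the incomplete Beta function. -/
open Real

lemma key_ineq (c u y : ℝ) (hc : 1 ≤ c) (hy : 0 < y)
    (hy2 : y ^ 2 = c ^ 2 * u ^ 2 + 1 + 2 * c) :
    u * (c ^ 2 * u ^ 2 + c * u ^ 2 / 2 + 3 * c / 2 + 1) ≤ ((1 + u ^ 2) / 2 + c * u ^ 2) * y := by
  have hc0 : 0 < c := lt_of_lt_of_le one_pos hc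
  have hA : 0 < (1 + u ^ 2) / 2 + c * u ^ 2 := by positivity
  have hC : 0 < c ^ 2 * u ^ 2 + c * u ^ 2 / 2 + 3 * c / 2 + 1 := by positivity
  rcases le_or_gt u 0 with h | h
  · have h1 : u * (c ^ 2 * u ^ 2 + c * u ^ 2 / 2 + 3 * c / 2 + 1) ≤ 0 :=
      mul_nonpos_of_nonpos_of_nonneg h hC.le
    have h2 : 0 ≤ ((1 + u ^ 2) / 2 + c * u ^ 2) * y := by positivity
    linarith
  · have hsq : (u * (c ^ 2 * u ^ 2 + c * u ^ 2 / 2 + 3 * c / 2 + 1)) ^ 2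
        ≤ (((1 + u ^ 2) / 2 + c * u ^ 2) * y) ^ 2 := by
      have : (((1 + u ^ 2) / 2 + c * u ^ 2) * y) ^ 2
          - (u * (c ^ 2 * u ^ 2 + c * u ^ 2 / 2 + 3 * c / 2 + 1)) ^ 2
          = (1 + 2 * c) * (1 - u ^ 2) ^ 2 / 4 := by
        rw [mul_pow, hy2]; ring
      nlinarith [sq_nonneg (1 - u ^ 2)]
    have hL : 0 ≤ u * (c ^ 2 * u ^ 2 + c * u ^ 2 / 2 + 3 * c / 2 + 1) := by positivity
    have hR : 0 ≤ ((1 + u ^ 2) / 2 + c * u ^ 2) * y := by positivity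
    exact (pow_le_pow_iff_left₀ hL hR two_ne_zero).mp hsq

lemma hrw_id (c x y P Q : ℝ) (hy : 0 < y) (h2 : y * y = c ^ 2 * (1 - 2 * x) ^ 2 + 1 + 2 * c) :
    c * (P * Q) + (c * P * Q * ((1 - x) - x)) * (c - 2 * c * x - y) +
      (P * x) * (Q * (1 - x)) * (-(2 * c) + (4 * c ^ 2 * (1 - 2 * x)) / (2 * y))
    = c * (P * Q) *
        ((((1 + (1 - 2 * x) ^ 2) / 2 + c * (1 - 2 * x) ^ 2) * y) -
          (1 - 2 * x) * (c ^ 2 * (1 - 2 * x) ^ 2 + c * (1 - 2 * x) ^ 2 / 2 + 3 * c / 2 + 1)) / y := by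
  rw [eq_div_iff hy.ne']
  field_simp
  linear_combination (-2 * c * P * Q * (1 - 2 * x)) * h2

theorem technical_beta_lemma (d : ℕ) (hd : 1 ≤ d) (s : ℝ) (hs : s ∈ Set.Ioo (0:ℝ) 1) :
    0 ≤ (d : ℝ) * (∫ t in (0:ℝ)..s, t ^ (d - 1) * (1 - t) ^ (d - 1)) +
      s ^ d * (1 - s) ^ d *
        ((d : ℝ) - 2 * d * s - Real.sqrt ((d : ℝ) ^ 2 * (1 - 2 * s) ^ 2 + 1 + 2 * d)) := by
  obtain ⟨hs0, hs1⟩ := hs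
  obtain ⟨m, rfl⟩ : ∃ m, d = m + 1 := ⟨d - 1, (Nat.succ_pred_eq_of_pos hd).symm⟩
  simp only [Nat.add_sub_cancel]
  set c : ℝ := (m : ℝ) + 1 with hcdef
  have hc1 : 1 ≤ c := by
    have : (0:ℝ) ≤ (m:ℝ) := Nat.cast_nonneg m
    simp only [hcdef]; linarith
  have hc0 : 0 < c := lt_of_lt_of_le one_pos hc1
  have hcast : ((m + 1 : ℕ) : ℝ) = c := by push_cast [hcdef]; ring
  rw [hcast]
  have hRpos : ∀ x : ℝ, 0 < c ^ 2 * (1 - 2 * x) ^ 2 + 1 + 2 * c := fun x => by positivity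
  set F : ℝ → ℝ := fun x => c * (∫ t in (0:ℝ)..x, t ^ m * (1 - t) ^ m) +
      x ^ (m + 1) * (1 - x) ^ (m + 1) *
        (c - 2 * c * x - Real.sqrt (c ^ 2 * (1 - 2 * x) ^ 2 + 1 + 2 * c)) with hFdef
  show 0 ≤ F s
  have hcont : Continuous fun t : ℝ => t ^ m * (1 - t) ^ m := by fun_prop
  set D : ℝ → ℝ := fun x =>
      c * (x ^ m * (1 - x) ^ m) +
      (c * x ^ m * (1 - x) ^ m * ((1 - x) - x)) *
        (c - 2 * c * x - Real.sqrt (c ^ 2 * (1 - 2 * x) ^ 2 + 1 + 2 * c)) +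
      (x ^ m * x) * ((1 - x) ^ m * (1 - x)) *
        (-(2 * c) + (4 * c ^ 2 * (1 - 2 * x)) /
          (2 * Real.sqrt (c ^ 2 * (1 - 2 * x) ^ 2 + 1 + 2 * c))) with hDdef
  have hF' : ∀ x : ℝ, HasDerivAt F (D x) x := by
    intro x
    have hI : HasDerivAt (fun x => ∫ t in (0:ℝ)..x, t ^ m * (1 - t) ^ m)
        (x ^ m * (1 - x) ^ m) x :=
      intervalIntegral.integral_hasDerivAt_right (hcont.intervalIntegrable 0 x)
        (hcont.stronglyMeasurableAtFilter _ _) hcont.continuousAt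
    have h1 : HasDerivAt (fun x : ℝ => x ^ (m + 1)) (↑(m + 1) * x ^ (m + 1 - 1)) x :=
      hasDerivAt_pow (m + 1) x
    have h1m : HasDerivAt (fun x : ℝ => 1 - x) (-1) x := by
      simpa using (hasDerivAt_id x).const_sub 1
    have h2 : HasDerivAt (fun x : ℝ => (1 - x) ^ (m + 1))
        (↑(m + 1) * (1 - x) ^ (m + 1 - 1) * (-1)) x := h1m.pow (m + 1)
    have hp := h1.mul h2
    have hu : HasDerivAt (fun x : ℝ => 1 - 2 * x) (-2) x := by
      simpa using ((hasDerivAt_id x).const_mul 2).const_sub 1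
    have hRd : HasDerivAt (fun x : ℝ => c ^ 2 * (1 - 2 * x) ^ 2 + 1 + 2 * c)
        (c ^ 2 * (((2:ℕ):ℝ) * (1 - 2 * x) ^ (2 - 1) * (-2))) x :=
      (((hu.pow 2).const_mul (c ^ 2)).add_const 1).add_const (2 * c)
    have hsq : HasDerivAt (fun x : ℝ => Real.sqrt (c ^ 2 * (1 - 2 * x) ^ 2 + 1 + 2 * c))
        ((c ^ 2 * (((2:ℕ):ℝ) * (1 - 2 * x) ^ (2 - 1) * (-2))) /
          (2 * Real.sqrt (c ^ 2 * (1 - 2 * x) ^ 2 + 1 + 2 * c))) x :=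
      hRd.sqrt (hRpos x).ne'
    have hlin : HasDerivAt (fun x : ℝ => c - 2 * c * x) (-(2 * c)) x := by
      simpa using ((hasDerivAt_id x).const_mul (2 * c)).const_sub c
    have hg := hlin.sub hsq
    have hcomb := (hI.const_mul c).add (hp.mul hg)
    rw [hFdef, hDdef]
    refine hcomb.congr_deriv ?_
    simp only [Nat.add_sub_cancel, Pi.mul_apply, Pi.sub_apply]
    push_cast
    rw [pow_succ x m, pow_succ (1 - x) m]
    ring
  have hdF : Differentiable ℝ F := fun x => (hF' x).differentiableAt
  have hD0 : ∀ x ∈ interior (Set.Icc (0:ℝ) 1), 0 ≤ deriv F x := by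
    intro x hx
    rw [interior_Icc] at hx
    obtain ⟨hx0, hx1⟩ := hx
    rw [(hF' x).deriv, hDdef]
    beta_reduce
    have hy : 0 < Real.sqrt (c ^ 2 * (1 - 2 * x) ^ 2 + 1 + 2 * c) := Real.sqrt_pos.2 (hRpos x)
    have hy2 : Real.sqrt (c ^ 2 * (1 - 2 * x) ^ 2 + 1 + 2 * c) ^ 2
        = c ^ 2 * (1 - 2 * x) ^ 2 + 1 + 2 * c := Real.sq_sqrt (hRpos x).le
    have hmul : Real.sqrt (c ^ 2 * (1 - 2 * x) ^ 2 + 1 + 2 * c) *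
        Real.sqrt (c ^ 2 * (1 - 2 * x) ^ 2 + 1 + 2 * c)
        = c ^ 2 * (1 - 2 * x) ^ 2 + 1 + 2 * c := Real.mul_self_sqrt (hRpos x).le
    rw [hrw_id c x (Real.sqrt (c ^ 2 * (1 - 2 * x) ^ 2 + 1 + 2 * c)) (x ^ m) ((1 - x) ^ m) hy hmul]
    have hkey := key_ineq c (1 - 2 * x) (Real.sqrt (c ^ 2 * (1 - 2 * x) ^ 2 + 1 + 2 * c)) hc1 hy hy2
    have hxm : (0:ℝ) ≤ x ^ m := pow_nonneg hx0.le m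
    have h1xm : (0:ℝ) ≤ (1 - x) ^ m := pow_nonneg (by linarith) m
    apply div_nonneg _ hy.le
    apply mul_nonneg (by positivity)
    linarith [hkey]
  have hmono : MonotoneOn F (Set.Icc (0:ℝ) 1) :=
    monotoneOn_of_deriv_nonneg (convex_Icc 0 1) hdF.continuous.continuousOn
      (fun x _ => (hdF x).differentiableWithinAt) hD0
  have hF0 : F 0 = 0 := by
    rw [hFdef]; simp
  have hle := hmono (Set.mem_Icc.2 ⟨le_refl 0, zero_le_one⟩) (Set.mem_Icc.2 ⟨hs0.le, hs1.le⟩) hs0.le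
  linarith [hF0 ▸ hle]
end
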